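/- As P → 1⁻, the limit of the Type-I worst-case redundancy μ_N(P) = 2 − P − h(P) − δ_N(P) equals 1/N, where h is the binary entropy function, δ_N(P) = (1 − P^{N−1})/(1 − P^N)·P − k(1−P) + (1 − P^{2^k−N})/(1 − P^N)·(1−P), and k = ⌈lg N⌉. -/
import Mathlib

open Real Filter

lemma one_sub_pow_eq (P : ℝ) (n : ℕ) :
    1 - P^n = (∑ i ∈ Finset.range n, P^i) * (1 - P) := by
  have h := geom_sum_mul P n
  nlinarith [h]

lemma ulogu : Tendsto (fun u : ℝ => u * logb 2 u) (nhdsWithin 0 (Set.Ioi 0)) (nhds 0) := by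
  have h := tendsto_log_mul_rpow_nhdsGT_zero (r := 1) zero_lt_one
  simp only [Real.rpow_one] at h
  have h2 : Tendsto (fun u : ℝ => (Real.log u * u) / Real.log 2)
      (nhdsWithin 0 (Set.Ioi 0)) (nhds (0 / Real.log 2)) := h.div_const _
  simp only [zero_div] at h2
  refine h2.congr (fun u => ?_)
  simp [Real.logb]
  ring

theorem stmt9 (N : ℕ) (hN : 2 ≤ N) :
    Tendsto (fun P : ℝ =>
        2 - P - (-P * logb 2 P - (1 - P) * logb 2 (1 - P))
        - ((1 - P^(N-1)) / (1 - P^N) * P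
            - (⌈logb 2 (N:ℝ)⌉₊ : ℝ) * (1 - P)
            + (1 - P^(2^(⌈logb 2 (N:ℝ)⌉₊) - N)) / (1 - P^N) * (1 - P)))
      (nhdsWithin 1 (Set.Iio 1)) (nhds (1/(N:ℝ))) := by
  set k : ℕ := ⌈logb 2 (N:ℝ)⌉₊ with hk
  set m : ℕ := 2^k - N with hm
  set S : ℕ → ℝ → ℝ := fun n P => ∑ i ∈ Finset.range n, P^i with hS
  -- the "nice" function
  set c : ℝ → ℝ := fun P => 2 - P + P * logb 2 P
      - (S (N-1) P / S N P * P - (k:ℝ) * (1 - P) + S m P / S N P * (1 - P)) with hc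
  set e : ℝ → ℝ := fun P => (1 - P) * logb 2 (1 - P) with he
  have hNne : (N:ℝ) ≠ 0 := by positivity
  -- limit of c by continuity
  have hSc : ∀ n, ContinuousAt (S n) 1 := by
    intro n
    exact (continuous_finset_sum _ (fun i _ => continuous_pow i)).continuousAt
  have hS1 : ∀ n, S n 1 = (n:ℝ) := by intro n; simp [hS]
  have hlogb : ContinuousAt (fun P : ℝ => logb 2 P) 1 := by
    have : ContinuousAt (fun P : ℝ => Real.log P / Real.log 2) 1 :=
      (Real.continuousAt_log one_ne_zero).div_const _
    simpa [Real.logb] using this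
  have hcc : ContinuousAt c 1 := by
    refine ((((continuousAt_const.sub continuousAt_id).add
      (continuousAt_id.mul hlogb))).sub ?_)
    refine (((((hSc (N-1)).div (hSc N) (by simp [hS1 N]; omega)).mul continuousAt_id).sub
      (continuousAt_const.mul (continuousAt_const.sub continuousAt_id))).add
      (((hSc m).div (hSc N) (by simp [hS1 N]; omega)).mul
        (continuousAt_const.sub continuousAt_id)))
  have hc1 : c 1 = 1/(N:ℝ) := by
    simp only [hc, hS1, Real.logb_one, sub_self, mul_zero, mul_one, mul_zero, add_zero,
      sub_zero, one_mul]
    have : ((N-1 : ℕ) : ℝ) = (N:ℝ) - 1 := by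
      push_cast [Nat.cast_sub (by omega : 1 ≤ N)]; ring
    rw [this]
    field_simp
    ring
  have hcl : Tendsto c (nhdsWithin 1 (Set.Iio 1)) (nhds (1/(N:ℝ))) := by
    rw [← hc1]
    exact (hcc.tendsto).mono_left nhdsWithin_le_nhds
  -- limit of e
  have hel : Tendsto e (nhdsWithin 1 (Set.Iio 1)) (nhds 0) := by
    have hmap : Tendsto (fun P : ℝ => 1 - P) (nhdsWithin 1 (Set.Iio 1))
        (nhdsWithin 0 (Set.Ioi 0)) := by
      rw [tendsto_nhdsWithin_iff]
      constructor
      · have : Tendsto (fun P : ℝ => 1 - P) (nhds 1) (nhds (1 - 1)) :=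
          (continuous_const.sub continuous_id).tendsto 1
        simpa using this.mono_left nhdsWithin_le_nhds
      · filter_upwards [self_mem_nhdsWithin] with P hP
        simp only [Set.mem_Iio] at hP
        simpa using hP
    exact ulogu.comp hmap
  have hsum := hcl.add hel
  simp only [add_zero] at hsum
  refine hsum.congr' ?_
  filter_upwards [self_mem_nhdsWithin] with P hP
  simp only [Set.mem_Iio] at hP
  have h1P : (1:ℝ) - P ≠ 0 := sub_ne_zero.mpr (by linarith)
  have key : ∀ j : ℕ, (1 - P^j) / (1 - P^N) = S j P / S N P := by
    intro j
    rw [one_sub_pow_eq P j, one_sub_pow_eq P N, mul_div_mul_right _ _ h1P]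
  simp only [hc, he]
  rw [← key (N-1), ← key m]
  ring
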